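/- Let S be a real subspace of the Hermitian d×d complex matrices. Then S contains a positive definite matrix if and only if every nonzero element of the orthogonal complement S⊥ (with respect to the trace inner product) is indefinite (neither positive semidefinite nor negative semidefinite). -/

import Mathlib

open Matrix
open scoped ComplexOrder Matrix.Norms.L2Operator

section AuxIndef

variable {d : ℕ}

private lemma conj_quad' (A : Matrix (Fin d) (Fin d) ℂ) (x : Fin d → ℂ) :
    star (star x ⬝ᵥ A *ᵥ x) = star x ⬝ᵥ Aᴴ *ᵥ x := by
  rw [star_dotProduct, star_star, star_mulVec, ← dotProduct_mulVec]

private lemma trace_conjT_mul' (Y M : Matrix (Fin d) (Fin d) ℂ) :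
    (Yᴴ * M).trace = ∑ p, ∑ q, (starRingEnd ℂ) (Y p q) * M p q := by
  rw [show ∑ p, ∑ q, (starRingEnd ℂ) (Y p q) * M p q
      = ∑ q, ∑ p, (starRingEnd ℂ) (Y p q) * M p q from Finset.sum_comm]
  simp [Matrix.trace, Matrix.mul_apply, Matrix.diag, Matrix.conjTranspose_apply]

private lemma exists_riesz' (f : Matrix (Fin d) (Fin d) ℂ →L[ℝ] ℝ) :
    ∃ Y : Matrix (Fin d) (Fin d) ℂ, ∀ M, (f M : ℝ) = ((Yᴴ * M).trace).re := by
  refine ⟨Matrix.of fun p q => ⟨f (single p q 1), f (single p q Complex.I)⟩, fun M => ?_⟩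
  rw [trace_conjT_mul', Complex.re_sum]
  conv_lhs => rw [matrix_eq_sum_single M]
  rw [map_sum]
  refine Finset.sum_congr rfl fun p _ => ?_
  rw [Complex.re_sum, map_sum]
  refine Finset.sum_congr rfl fun q _ => ?_
  have hdecomp : single p q (M p q)
      = (M p q).re • single p q (1:ℂ) + (M p q).im • single p q Complex.I := by
    rw [smul_single, smul_single, ← single_add]
    have h1 : (M p q) = ((M p q).re • (1:ℂ) + (M p q).im • Complex.I) := by
      apply Complex.ext <;> simp [Complex.real_smul]
    rw [← h1]
  rw [hdecomp, map_add, f.map_smul, f.map_smul]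
  simp [Complex.mul_re, Complex.conj_re, Complex.conj_im, smul_eq_mul]
  ring

private lemma trace_conjT_self_eq_zero' {A : Matrix (Fin d) (Fin d) ℂ}
    (h : (Aᴴ * A).trace = 0) : A = 0 := by
  have hnn : ∀ j : Fin d, 0 ≤ star (fun i => A i j) ⬝ᵥ (fun i => A i j) :=
    fun j => dotProduct_star_self_nonneg _
  have hterm : ∀ j ∈ Finset.univ, star (fun i => A i j) ⬝ᵥ (fun i => A i j) = 0 := by
    rw [← Finset.sum_eq_zero_iff_of_nonneg (fun j _ => hnn j)]
    rw [← h]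
    simp [Matrix.trace, Matrix.mul_apply, Matrix.diag, Matrix.conjTranspose_apply, dotProduct]
  ext i j
  have := dotProduct_star_self_eq_zero.mp (hterm j (Finset.mem_univ j))
  simpa using congr_fun this i

open scoped MatrixOrder in
private lemma psd_eq_zero_of_trace_mul_posdef' {X Z : Matrix (Fin d) (Fin d) ℂ}
    (hX : X.PosDef) (hZ : Z.PosSemidef) (h : (Z * X).trace = 0) : Z = 0 := by
  classical
  set R := CFC.sqrt Z with hRdef
  have hR : R.PosSemidef := (CFC.sqrt_nonneg Z).posSemidef
  have hRR : R * R = Z := CFC.sqrt_mul_sqrt_self Z hZ.nonneg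
  set Q := CFC.sqrt X with hQdef
  have hQ : Q.PosSemidef := (CFC.sqrt_nonneg X).posSemidef
  have hQQ : Q * Q = X := CFC.sqrt_mul_sqrt_self X hX.posSemidef.nonneg
  have key : ((Q * R)ᴴ * (Q * R)).trace = 0 := by
    have : (Q * R)ᴴ * (Q * R) = R * (Q * Q) * R := by
      rw [conjTranspose_mul, hR.1.eq, hQ.1.eq]; noncomm_ring
    rw [this, hQQ, Matrix.trace_mul_comm, ← Matrix.mul_assoc, hRR, h]
  have hQR : Q * R = 0 := trace_conjT_self_eq_zero' key
  have hdetQ : IsUnit Q.det := by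
    have hdet : Q.det * Q.det = X.det := by rw [← det_mul, hQQ]
    have hp := hX.det_pos
    rw [← hdet] at hp
    have : Q.det ≠ 0 := by
      intro h0; rw [h0, mul_zero] at hp; exact lt_irrefl _ hp
    exact this.isUnit
  have hRzero : R = 0 := by
    have := congrArg (fun B => Q⁻¹ * B) hQR
    simpa [← Matrix.mul_assoc, Matrix.nonsing_inv_mul Q hdetQ] using this
  rw [← hRR, hRzero, Matrix.mul_zero]

private lemma quad_bound' (M : Matrix (Fin d) (Fin d) ℂ) (x : Fin d → ℂ) :
    |(star x ⬝ᵥ M *ᵥ x).re| ≤ ‖M‖ * (star x ⬝ᵥ x).re := by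
  set x' : EuclideanSpace ℂ (Fin d) := (WithLp.equiv 2 _).symm x with hx'
  have h1 : star x ⬝ᵥ (M *ᵥ x) = @inner ℂ _ _ x' ((WithLp.equiv 2 _).symm (M *ᵥ x)) := by
    rw [dotProduct_comm]; rfl
  have h2 : ‖@inner ℂ _ _ x' ((WithLp.equiv 2 _).symm (M *ᵥ x))‖
      ≤ ‖x'‖ * (‖M‖ * ‖x'‖) := by
    refine (norm_inner_le_norm _ _).trans ?_
    refine mul_le_mul_of_nonneg_left ?_ (norm_nonneg _)
    exact M.l2_opNorm_mulVec x'
  have h3 : (star x ⬝ᵥ x).re = ‖x'‖ ^ 2 := by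
    have := @inner_self_eq_norm_sq ℂ _ _ _ _ x'
    rw [EuclideanSpace.inner_eq_star_dotProduct, dotProduct_comm] at this
    exact this
  calc |(star x ⬝ᵥ M *ᵥ x).re| ≤ ‖star x ⬝ᵥ M *ᵥ x‖ := Complex.abs_re_le_norm _
    _ ≤ ‖x'‖ * (‖M‖ * ‖x'‖) := by rw [h1]; exact h2
    _ = ‖M‖ * (star x ⬝ᵥ x).re := by rw [h3]; ring

private lemma isOpen_posRe' [Nonempty (Fin d)] :
    IsOpen {A : Matrix (Fin d) (Fin d) ℂ |
      ∀ x : Fin d → ℂ, x ≠ 0 → 0 < (star x ⬝ᵥ A *ᵥ x).re} := by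
  rw [Metric.isOpen_iff]
  intro A hA
  set H : Matrix (Fin d) (Fin d) ℂ := A + Aᴴ with hHdef
  have hH : H.IsHermitian := by
    simp [Matrix.IsHermitian, hHdef, conjTranspose_add, add_comm]
  have hquad : ∀ x : Fin d → ℂ,
      (star x ⬝ᵥ H *ᵥ x).re = 2 * (star x ⬝ᵥ A *ᵥ x).re := by
    intro x
    have hc : (star x ⬝ᵥ Aᴴ *ᵥ x).re = (star x ⬝ᵥ A *ᵥ x).re := by
      rw [← conj_quad']; simp
    rw [hHdef, add_mulVec, dotProduct_add, Complex.add_re, hc]; ring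
  have hHpos : H.PosDef := by
    refine posDef_iff_dotProduct_mulVec.mpr ⟨hH, fun x hx => ?_⟩
    rw [RCLike.pos_iff]
    simp only [RCLike.re_to_complex, RCLike.im_to_complex]
    constructor
    · rw [hquad x]; have := hA x hx; positivity
    · have h2 := conj_quad' H x
      rw [hH.eq] at h2
      simpa using Complex.conj_eq_iff_im.mp h2
  set ε : ℝ := Finset.univ.inf' Finset.univ_nonempty hH.eigenvalues with hεdef
  have hε : 0 < ε := by
    obtain ⟨i, _, hi⟩ := Finset.exists_mem_eq_inf' Finset.univ_nonempty hH.eigenvalues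
    rw [hεdef, hi]
    exact hHpos.eigenvalues_pos i
  have hpsd : (H - (ε:ℂ) • 1).PosSemidef := by
    set U : Matrix (Fin d) (Fin d) ℂ := (hH.eigenvectorUnitary : Matrix (Fin d) (Fin d) ℂ)
    have hU : U * star U = 1 := mem_unitaryGroup_iff.mp hH.eigenvectorUnitary.2
    have h1 : U * ((ε:ℂ) • 1) * star U = (ε:ℂ) • 1 := by
      rw [Matrix.mul_smul, Matrix.mul_one, Matrix.smul_mul, hU]
    have hrepr : H - (ε:ℂ) • 1
        = U * (diagonal (RCLike.ofReal ∘ hH.eigenvalues) - (ε:ℂ) • 1) * star U := by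
      rw [Matrix.mul_sub, Matrix.sub_mul, h1]; congr 1
      exact (hH.spectral_theorem).trans (Unitary.conjStarAlgAut_apply _ _)
    rw [hrepr]
    have hdiag : (diagonal ((RCLike.ofReal ∘ hH.eigenvalues : Fin d → ℂ))
        - (ε:ℂ) • (1 : Matrix (Fin d) (Fin d) ℂ)).PosSemidef := by
      have heq : diagonal ((RCLike.ofReal ∘ hH.eigenvalues : Fin d → ℂ))
            - (ε:ℂ) • (1 : Matrix (Fin d) (Fin d) ℂ)
          = diagonal (fun i => ((hH.eigenvalues i - ε : ℝ) : ℂ)) := by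
        rw [← diagonal_one, ← diagonal_smul, diagonal_sub]
        funext i; simp
      rw [heq]
      rw [posSemidef_diagonal_iff]
      intro i
      rw [show ((0:ℂ) ≤ ((hH.eigenvalues i - ε : ℝ) : ℂ)) ↔ (0:ℝ) ≤ hH.eigenvalues i - ε by
        rw [RCLike.nonneg_iff]; simp]
      have : ε ≤ hH.eigenvalues i := Finset.inf'_le _ (Finset.mem_univ i)
      linarith
    have := hdiag.mul_mul_conjTranspose_same U
    rwa [← Matrix.star_eq_conjTranspose] at this
  have hKey : ∀ x : Fin d → ℂ, ε * (star x ⬝ᵥ x).re ≤ (star x ⬝ᵥ H *ᵥ x).re := by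
    intro x
    have h0 := hpsd.re_dotProduct_nonneg x
    have hexp : (star x ⬝ᵥ (H - (ε:ℂ) • 1) *ᵥ x)
        = star x ⬝ᵥ H *ᵥ x - (ε:ℂ) * (star x ⬝ᵥ x) := by
      rw [sub_mulVec, dotProduct_sub, smul_mulVec, one_mulVec, dotProduct_smul]
      simp [smul_eq_mul]
    rw [hexp] at h0
    simp only [RCLike.re_to_complex, Complex.sub_re, Complex.mul_re, Complex.ofReal_re,
      Complex.ofReal_im] at h0
    linarith
  refine ⟨ε / 2, by linarith, fun B hB => ?_⟩
  rw [Metric.mem_ball, dist_eq_norm] at hB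
  intro x hx
  have hn2 : 0 < (star x ⬝ᵥ x).re := by
    have := dotProduct_star_self_pos_iff (v := x) |>.mpr hx
    exact (RCLike.pos_iff.mp this).1
  have hsplit : (star x ⬝ᵥ (B - A) *ᵥ x).re
      = (star x ⬝ᵥ B *ᵥ x).re - (star x ⬝ᵥ A *ᵥ x).re := by
    rw [sub_mulVec, dotProduct_sub, Complex.sub_re]
  have h2 : ε * (star x ⬝ᵥ x).re ≤ 2 * (star x ⬝ᵥ A *ᵥ x).re := by
    have := hKey x; rwa [hquad x] at this
  have h3 := quad_bound' (B - A) x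
  have habs := abs_le.mp h3
  have hmul : ‖B - A‖ * (star x ⬝ᵥ x).re < (ε/2) * (star x ⬝ᵥ x).re :=
    mul_lt_mul_of_pos_right hB hn2
  nlinarith [habs.1, habs.2]

private lemma trace_mul_vecMulVec' (W : Matrix (Fin d) (Fin d) ℂ) (x : Fin d → ℂ) :
    (W * vecMulVec x (star x)).trace = star x ⬝ᵥ W *ᵥ x := by
  simp only [Matrix.trace, Matrix.diag, Matrix.mul_apply, vecMulVec_apply, mulVec, dotProduct,
    Pi.star_apply]
  refine Finset.sum_congr rfl fun j _ => ?_
  rw [Finset.mul_sum]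
  refine Finset.sum_congr rfl fun i _ => ?_
  ring

end AuxIndef

/-- A real subspace `S` of Hermitian `d×d` complex matrices contains a positive
definite matrix iff every nonzero Hermitian element of its orthogonal complement (w.r.t. the
trace inner product) is indefinite (neither psd nor nsd). -/
theorem definite_iff_orthocomplement_indefinite
    {d : ℕ} (S : Submodule ℝ (Matrix (Fin d) (Fin d) ℂ))
    (hSh : ∀ M ∈ S, M.IsHermitian) :
    (∃ X ∈ S, X.PosDef) ↔
      ∀ Y : Matrix (Fin d) (Fin d) ℂ, Y.IsHermitian →
        (∀ M ∈ S, (Yᴴ * M).trace = 0) → Y ≠ 0 →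
        ¬ Y.PosSemidef ∧ ¬ (-Y).PosSemidef := by
  constructor
  · rintro ⟨X, hXS, hX⟩ Y hY htr hYne
    have hXtr := htr X hXS
    rw [hY.eq] at hXtr
    constructor
    · intro hpsd
      exact hYne (psd_eq_zero_of_trace_mul_posdef' hX hpsd hXtr)
    · intro hpsd
      have h2 : ((-Y) * X).trace = 0 := by
        rw [Matrix.neg_mul, Matrix.trace_neg, neg_eq_zero, hXtr]
      have := psd_eq_zero_of_trace_mul_posdef' hX hpsd h2
      exact hYne (by simpa [neg_eq_zero] using this)
  · intro hRHS
    by_contra hno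
    push_neg at hno
    rcases Nat.eq_zero_or_pos d with hd | hd
    · subst hd
      refine hno 0 S.zero_mem (posDef_iff_dotProduct_mulVec.mpr ⟨isHermitian_zero, fun x hx => ?_⟩)
      exact absurd (funext fun i => i.elim0) hx
    haveI : Nonempty (Fin d) := ⟨⟨0, hd⟩⟩
    set s : Set (Matrix (Fin d) (Fin d) ℂ) :=
      {A | ∀ x : Fin d → ℂ, x ≠ 0 → 0 < (star x ⬝ᵥ A *ᵥ x).re} with hsdef
    have hconv : Convex ℝ s := by
      intro P hP Q hQ a b ha hb hab
      intro x hx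
      have hPx := hP x hx
      have hQx := hQ x hx
      have hexp : (star x ⬝ᵥ (a • P + b • Q) *ᵥ x).re
          = a * (star x ⬝ᵥ P *ᵥ x).re + b * (star x ⬝ᵥ Q *ᵥ x).re := by
        rw [add_mulVec, dotProduct_add, Complex.add_re, smul_mulVec, smul_mulVec,
          dotProduct_smul, dotProduct_smul]
        simp [Complex.real_smul, Complex.re_ofReal_mul]
      rw [hexp]
      rcases eq_or_lt_of_le ha with ha0 | ha0
      · rw [← ha0] at hab ⊢; simp at hab; rw [hab]; simpa using hQx
      rcases eq_or_lt_of_le hb with hb0 | hb0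
      · rw [← hb0] at hab ⊢; simp at hab; rw [hab]; simpa using hPx
      positivity
    have hdisj : Disjoint s (S : Set (Matrix (Fin d) (Fin d) ℂ)) := by
      rw [Set.disjoint_left]
      intro A hAs hAS
      refine hno A hAS (posDef_iff_dotProduct_mulVec.mpr ⟨hSh A hAS, fun x hx => ?_⟩)
      rw [RCLike.pos_iff]
      refine ⟨hAs x hx, ?_⟩
      have h2 := conj_quad' A x
      rw [(hSh A hAS).eq] at h2
      simpa using Complex.conj_eq_iff_im.mp h2
    obtain ⟨f, u, hfs, hfS⟩ := geometric_hahn_banach_open hconv isOpen_posRe' S.convex hdisj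
    have hf0 : ∀ M ∈ S, f M = 0 := by
      intro M hM
      by_contra hfM
      have h1 : u ≤ ((u - 1) / f M) * f M := by
        have := hfS (((u - 1) / f M) • M) (S.smul_mem _ hM)
        rwa [f.map_smul, smul_eq_mul] at this
      rw [div_mul_cancel₀ _ hfM] at h1
      linarith
    have hu0 : u ≤ 0 := by
      have := hfS 0 S.zero_mem
      simpa using this
    obtain ⟨Y, hrep⟩ := exists_riesz' f
    set W : Matrix (Fin d) (Fin d) ℂ := -((2:ℝ)⁻¹ • (Y + Yᴴ)) with hWdef
    have hWherm : W.IsHermitian := by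
      simp [Matrix.IsHermitian, hWdef, conjTranspose_neg, conjTranspose_smul, conjTranspose_add,
        add_comm]
    have hWtr : ∀ M : Matrix (Fin d) (Fin d) ℂ, M.IsHermitian →
        (Wᴴ * M).trace = -((f M : ℝ) : ℂ) := by
      intro M hM
      have hz : (Y * M).trace = star ((Yᴴ * M).trace) := by
        rw [← Matrix.trace_conjTranspose, conjTranspose_mul, conjTranspose_conjTranspose,
          hM.eq, Matrix.trace_mul_comm]
      rw [hWherm.eq, hWdef, Matrix.neg_mul, Matrix.trace_neg, Matrix.smul_mul, Matrix.trace_smul,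
        Matrix.add_mul, Matrix.trace_add, hz]
      rw [hrep M]
      have hstar : star ((Yᴴ * M).trace) = (starRingEnd ℂ) ((Yᴴ * M).trace) := rfl
      rw [show star ((Yᴴ * M).trace) + (Yᴴ * M).trace
          = 2 * (((Yᴴ * M).trace).re : ℂ) by
        rw [hstar, add_comm, Complex.add_conj]; push_cast; ring]
      rw [Complex.real_smul]
      push_cast
      ring
    have h1s : (1 : Matrix (Fin d) (Fin d) ℂ) ∈ s := by
      intro x hx
      rw [one_mulVec]
      have := dotProduct_star_self_pos_iff (v := x) |>.mpr hx
      exact (RCLike.pos_iff.mp this).1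
    have hf1 : f 1 < u := hfs 1 h1s
    have hWne : W ≠ 0 := by
      intro h0
      have h1 := hWtr 1 isHermitian_one
      rw [h0] at h1
      simp only [conjTranspose_zero, Matrix.zero_mul, Matrix.trace_zero] at h1
      have : (f 1 : ℝ) = 0 := by
        have := h1.symm
        rwa [neg_eq_zero, Complex.ofReal_eq_zero] at this
      linarith
    have hWS : ∀ M ∈ S, (Wᴴ * M).trace = 0 := fun M hM => by
      rw [hWtr M (hSh M hM), hf0 M hM]; simp
    have hWpsd : W.PosSemidef := by
      refine posSemidef_iff_dotProduct_mulVec.mpr ⟨hWherm, fun x => ?_⟩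
      set P := vecMulVec x (star x) with hPdef
      have hPherm : P.IsHermitian := by
        ext i j
        simp [hPdef, vecMulVec_apply, conjTranspose_apply, mul_comm]
      have hkey : ∀ ε : ℝ, 0 < ε →
          0 < ((Wᴴ * P).trace).re + ε * ((Wᴴ).trace).re := by
        intro ε hε
        have hPmulVec : ∀ y : Fin d → ℂ, P *ᵥ y = (star x ⬝ᵥ y) • x := by
          intro y
          funext i
          simp only [hPdef, mulVec, dotProduct, vecMulVec_apply, Pi.smul_apply, Pi.star_apply,
            smul_eq_mul]
          rw [Finset.sum_mul]
          refine Finset.sum_congr rfl fun j _ => ?_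
          ring
        have hPε : P + (ε:ℂ) • 1 ∈ s := by
          intro y hy
          have hPquad : 0 ≤ (star y ⬝ᵥ P *ᵥ y).re := by
            have hsd : star y ⬝ᵥ x = star (star x ⬝ᵥ y) := star_dotProduct y x
            have hstar2 : star (star x ⬝ᵥ y) = (starRingEnd ℂ) (star x ⬝ᵥ y) := rfl
            rw [hPmulVec y, dotProduct_smul, smul_eq_mul, hsd, hstar2, Complex.mul_conj]
            simp [Complex.normSq_nonneg]
          have hexp : (star y ⬝ᵥ (P + (ε:ℂ) • 1) *ᵥ y).re
              = (star y ⬝ᵥ P *ᵥ y).re + ε * (star y ⬝ᵥ y).re := by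
            rw [add_mulVec, dotProduct_add, Complex.add_re, smul_mulVec, one_mulVec,
              dotProduct_smul]
            simp [Complex.re_ofReal_mul]
          rw [hexp]
          have hy2 : 0 < (star y ⬝ᵥ y).re := by
            have := dotProduct_star_self_pos_iff (v := y) |>.mpr hy
            exact (RCLike.pos_iff.mp this).1
          nlinarith
        have hPεherm : (P + (ε:ℂ) • 1).IsHermitian := by
          refine hPherm.add ?_
          simp [Matrix.IsHermitian, conjTranspose_smul, Complex.star_def, Complex.conj_ofReal]
        have hlt : f (P + (ε:ℂ) • 1) < u := hfs _ hPε
        have htr2 := hWtr _ hPεherm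
        rw [Matrix.mul_add, Matrix.trace_add, Matrix.mul_smul, Matrix.mul_one,
          Matrix.trace_smul] at htr2
        have hre := congrArg Complex.re htr2
        simp only [Complex.add_re, Complex.neg_re, Complex.ofReal_re,
          smul_eq_mul, Complex.re_ofReal_mul] at hre
        rw [hre]
        linarith
      have hre0 : 0 ≤ ((Wᴴ * P).trace).re := by
        by_contra hneg
        push_neg at hneg
        set t : ℝ := ((Wᴴ * P).trace).re with htdef
        set c : ℝ := ((Wᴴ).trace).re with hcdef
        rcases le_or_gt c 0 with hc | hc
        · have := hkey 1 one_pos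
          nlinarith
        · have h1 := hkey (-t / c) (div_pos (by linarith) hc)
          rw [div_mul_cancel₀ _ hc.ne'] at h1
          linarith
      have hq : (Wᴴ * P).trace = star x ⬝ᵥ W *ᵥ x := by
        rw [hWherm.eq, hPdef, trace_mul_vecMulVec']
      rw [RCLike.nonneg_iff]
      constructor
      · rw [RCLike.re_to_complex, ← hq]; exact hre0
      · rw [RCLike.im_to_complex]
        have h2 := conj_quad' W x
        rw [hWherm.eq] at h2
        simpa using Complex.conj_eq_iff_im.mp h2
    exact (hRHS W hWherm hWS hWne).1 hWpsd
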